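/- (Randomization law of large numbers.) Let {a_{i,n}}_{i=1}^n be a triangular array of real constants and set ā_n := (1/n)∑_{i=1}^n a_{i,n}. If (1/n)∑_{i=1}^n a_{i,n}² = o(n), then |(1/n_{1,n})∑_{i : Z_{i,n} = 1} a_{i,n} − ā_n| → 0 in probability as n → ∞. -/

import Mathlib

open MeasureTheory ProbabilityTheory Filter Finset Real Set
open scoped ENNReal NNReal

noncomputable section

/-- Number of treated units in an assignment vector. -/
def ones {n : ℕ} (z : Fin n → Bool) : ℕ := (Finset.univ.filter fun i => z i = true).card

/-- Completely randomized design: `Z n` is uniform over the assignment vectors in `{0,1}^n`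
with exactly `n1 n` ones. -/
def IsCRD {Ω : Type} [MeasurableSpace Ω] (P : Measure Ω)
    (Z : (n : ℕ) → Ω → Fin n → Bool) (n1 : ℕ → ℕ) : Prop :=
  ∀ n, Measurable (Z n) ∧ P {ω | ones (Z n ω) = n1 n} = 1 ∧
    ∀ v w : Fin n → Bool, ones v = n1 n → ones w = n1 n →
      P {ω | Z n ω = v} = P {ω | Z n ω = w}

/-- Convergence to zero in probability for a sequence of (real-valued) random variables. -/
def TendstoInProb {Ω : Type} [MeasurableSpace Ω] (P : Measure Ω) (f : ℕ → Ω → ℝ) : Prop :=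
  ∀ ε : ℝ, 0 < ε → Tendsto (fun n => P {ω | ε ≤ |f n ω|}) atTop (nhds 0)

/-- Euclidean norm of a vector in `ℝ^d`. -/
def enorm2 {d : ℕ} (v : Fin d → ℝ) : ℝ := Real.sqrt (∑ j, (v j) ^ 2)

/-- Euclidean inner product on `ℝ^d`. -/
def dotp {d : ℕ} (θ v : Fin d → ℝ) : ℝ := ∑ j, θ j * v j

/-- The empirical `L²(Pₙ)` pseudo-distance `‖f - g‖ₙ` between two regression functions,
relative to the design points `x n 1, …, x n n`. -/
def distN {E : Type*} (x : (n : ℕ) → Fin n → E) (n : ℕ) (f g : E → ℝ) : ℝ :=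
  Real.sqrt ((n : ℝ)⁻¹ * ∑ i, (f (x n i) - g (x n i)) ^ 2)

/-- The `s`-covering number of a family `F` under a pseudo-distance `dst`. -/
def coveringNumber {α : Type*} (F : Set α) (dst : α → α → ℝ) (s : ℝ) : ℝ≥0∞ :=
  ⨅ (T : Finset α) (_ : ∀ f ∈ F, ∃ t ∈ T, dst f t ≤ s), (T.card : ℝ≥0∞)

/-- `√(log N)`, valued in `ℝ≥0∞` (it is `⊤` when the covering number is infinite). -/
def sqrtLog (N : ℝ≥0∞) : ℝ≥0∞ :=
  if N = ⊤ then ⊤ else ENNReal.ofReal (Real.sqrt (Real.log N.toReal))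

def Wset (n n1 : ℕ) : Finset (Fin n → Bool) := Finset.univ.filter (fun v => ones v = n1)

def Mcnt (n n1 : ℕ) (i j : Fin n) : ℕ :=
  ((Wset n n1).filter (fun v => v i = true ∧ v j = true)).card

lemma ones_comp_perm {n : ℕ} (v : Fin n → Bool) (σ : Equiv.Perm (Fin n)) :
    ones (v ∘ σ) = ones v := by
  unfold ones
  rw [Finset.card_filter, Finset.card_filter]
  exact Equiv.sum_comp σ (fun i => if v i = true then 1 else 0)

lemma Mcnt_perm {n n1 : ℕ} (σ : Equiv.Perm (Fin n)) (i j : Fin n) :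
    Mcnt n n1 (σ i) (σ j) = Mcnt n n1 i j := by
  unfold Mcnt
  refine Finset.card_nbij' (fun v => v ∘ σ) (fun v => v ∘ σ.symm) ?_ ?_ ?_ ?_
  · intro v hv
    simp only [Wset, Finset.mem_coe, Finset.mem_filter, Finset.mem_univ, true_and, Function.comp] at hv ⊢
    exact ⟨by rw [ones_comp_perm]; exact hv.1, hv.2⟩
  · intro v hv
    simp only [Wset, Finset.mem_coe, Finset.mem_filter, Finset.mem_univ, true_and, Function.comp] at hv ⊢
    constructor
    · rw [ones_comp_perm]; exact hv.1
    · simpa using hv.2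
  · intro v _; ext x; simp
  · intro v _; ext x; simp

lemma Mcnt_diag {n n1 : ℕ} (i j : Fin n) : Mcnt n n1 i i = Mcnt n n1 j j := by
  have h := Mcnt_perm (n1 := n1) (Equiv.swap i j) j j
  simpa [Equiv.swap_apply_right] using h

lemma Mcnt_off {n n1 : ℕ} {i j k l : Fin n} (hij : i ≠ j) (hkl : k ≠ l) :
    Mcnt n n1 i j = Mcnt n n1 k l := by
  set τ := Equiv.swap k i with hτ
  set ρ := Equiv.swap (τ l) j with hρ
  have hτk : τ k = i := Equiv.swap_apply_left k i
  have hne1 : i ≠ τ l := by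
    intro h
    have hti : τ i = k := Equiv.swap_apply_right k i
    have h2 := congrArg τ h
    rw [Equiv.swap_apply_self, hti] at h2
    exact hkl h2
  have hσk : ρ (τ k) = i := by
    rw [hτk]
    exact Equiv.swap_apply_of_ne_of_ne hne1 hij
  have hσl : ρ (τ l) = j := Equiv.swap_apply_left _ _
  have h := Mcnt_perm (n1 := n1) (τ.trans ρ) k l
  simp only [Equiv.trans_apply] at h
  rw [hσk, hσl] at h
  exact h

lemma Mcnt_sum_diag {n n1 : ℕ} :
    ∑ i : Fin n, Mcnt n n1 i i = (Wset n n1).card * n1 := by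
  have : ∀ i : Fin n, Mcnt n n1 i i = ∑ v ∈ Wset n n1, if v i = true then 1 else 0 := by
    intro i
    unfold Mcnt
    rw [Finset.card_filter]
    exact Finset.sum_congr rfl (fun v _ => by by_cases h : v i = true <;> simp [h])
  simp only [this]
  rw [Finset.sum_comm]
  have : ∀ v ∈ Wset n n1, (∑ i : Fin n, if v i = true then 1 else 0) = n1 := by
    intro v hv
    simp only [Wset, Finset.mem_filter] at hv
    rw [← Finset.card_filter]
    exact hv.2
  rw [Finset.sum_congr rfl this, Finset.sum_const, smul_eq_mul]

lemma Wset_nonempty {n n1 : ℕ} (h : n1 ≤ n) : (Wset n n1).Nonempty := by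
  refine ⟨fun i => decide (i.val < n1), ?_⟩
  rw [Wset, Finset.mem_filter]; simp only [Finset.mem_univ, true_and, ones]
  have : (Finset.univ.filter fun i : Fin n => (decide (i.val < n1)) = true)
      = Finset.univ.filter fun i : Fin n => i.val < n1 := by
    apply Finset.filter_congr; intro i _; simp
  rw [this]
  rw [Finset.card_nbij (fun i => i.val) (t := Finset.range n1)]
  · exact Finset.card_range n1
  · intro i hi; simp at hi ⊢; exact hi
  · intro i hi j hj hij; exact Fin.val_injective hij
  · intro m hm
    simp only [Finset.coe_filter, Set.mem_image] at hm ⊢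
    simp at hm
    exact ⟨⟨m, lt_of_lt_of_le hm h⟩, by simp [hm], rfl⟩

lemma core_bound {n n1 : ℕ} (hn : 2 ≤ n) (b : Fin n → ℝ) (hb : ∑ i, b i = 0) :
    ∑ v ∈ Wset n n1, (∑ i ∈ Finset.univ.filter (fun i => v i = true), b i)^2
      ≤ (((Wset n n1).card : ℝ) * n1 / n) * ∑ i, (b i)^2 := by
  have h0 : (0:ℕ) < n := by omega
  set i0 : Fin n := ⟨0, by omega⟩
  set i1 : Fin n := ⟨1, by omega⟩
  have hi01 : i0 ≠ i1 := by simp [i0, i1, Fin.ext_iff]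
  set m1 : ℝ := (Mcnt n n1 i0 i0 : ℝ) with hm1
  set m2 : ℝ := (Mcnt n n1 i0 i1 : ℝ) with hm2
  have hexp : ∑ v ∈ Wset n n1, (∑ i ∈ Finset.univ.filter (fun i => v i = true), b i)^2
      = ∑ i : Fin n, ∑ j : Fin n, b i * b j * (Mcnt n n1 i j : ℝ) := by
    have h1 : ∀ v : Fin n → Bool,
        (∑ i ∈ Finset.univ.filter (fun i => v i = true), b i)^2
        = ∑ i : Fin n, ∑ j : Fin n,
            (if v i = true then b i else 0) * (if v j = true then b j else 0) := by
      intro v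
      rw [Finset.sum_filter, sq, Finset.sum_mul_sum]
    simp only [h1]
    rw [Finset.sum_comm]
    refine Finset.sum_congr rfl (fun i _ => ?_)
    rw [Finset.sum_comm]
    refine Finset.sum_congr rfl (fun j _ => ?_)
    have h2 : ∀ v : Fin n → Bool,
        (if v i = true then b i else 0) * (if v j = true then b j else 0)
        = if (v i = true ∧ v j = true) then b i * b j else 0 := by
      intro v
      by_cases hvi : v i = true <;> by_cases hvj : v j = true <;> simp [hvi, hvj]
    simp only [h2]
    rw [← Finset.sum_filter, Finset.sum_const, nsmul_eq_mul]
    rw [Mcnt]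
    ring
  rw [hexp]
  have hsplit : ∀ i : Fin n,
      ∑ j : Fin n, b i * b j * (Mcnt n n1 i j : ℝ) = (b i)^2 * (m1 - m2) := by
    intro i
    have hmem : i ∈ (Finset.univ : Finset (Fin n)) := Finset.mem_univ i
    rw [← Finset.add_sum_erase _ _ hmem]
    have hdiag : (Mcnt n n1 i i : ℝ) = m1 := by
      rw [hm1]; exact_mod_cast Mcnt_diag (n1 := n1) i i0
    have hoff : ∀ j ∈ Finset.univ.erase i, b i * b j * (Mcnt n n1 i j : ℝ) = b i * b j * m2 := by
      intro j hj
      have hij : i ≠ j := (Finset.ne_of_mem_erase hj).symm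
      rw [hm2]
      congr 1
      exact_mod_cast Mcnt_off (n1 := n1) hij hi01
    rw [Finset.sum_congr rfl hoff]
    have herase : ∑ j ∈ Finset.univ.erase i, b j = -(b i) := by
      have := Finset.add_sum_erase Finset.univ b hmem
      rw [hb] at this
      linarith
    have : ∑ j ∈ Finset.univ.erase i, b i * b j * m2
        = (∑ j ∈ Finset.univ.erase i, b j) * (b i * m2) := by
      rw [Finset.sum_mul]
      exact Finset.sum_congr rfl (fun j _ => by ring)
    rw [this, herase, hdiag]
    ring
  rw [Finset.sum_congr rfl (fun i _ => hsplit i), ← Finset.sum_mul]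
  have hm1eq : (n : ℝ) * m1 = ((Wset n n1).card : ℝ) * n1 := by
    have h := Mcnt_sum_diag (n := n) (n1 := n1)
    have h2 : ∀ i : Fin n, Mcnt n n1 i i = Mcnt n n1 i0 i0 := fun i => Mcnt_diag i i0
    rw [Finset.sum_congr rfl (fun i _ => h2 i), Finset.sum_const, Finset.card_univ,
      Fintype.card_fin, smul_eq_mul] at h
    rw [hm1]
    exact_mod_cast h
  have hm1v : m1 = ((Wset n n1).card : ℝ) * n1 / n := by
    field_simp at hm1eq ⊢
    linarith
  have hb2 : (0:ℝ) ≤ ∑ i, (b i)^2 := Finset.sum_nonneg (fun i _ => sq_nonneg _)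
  have hm2nn : (0:ℝ) ≤ m2 := by positivity
  calc (∑ i, (b i)^2) * (m1 - m2) ≤ (∑ i, (b i)^2) * m1 := by nlinarith
    _ = (((Wset n n1).card : ℝ) * n1 / n) * ∑ i, (b i)^2 := by rw [hm1v]; ring

open MeasureTheory in
lemma per_n_bound {Ω : Type} [MeasurableSpace Ω] (P : Measure Ω) [IsProbabilityMeasure P]
    {n n1 : ℕ} (Z : Ω → Fin n → Bool) (hZ : Measurable Z)
    (hE : P {ω | ones (Z ω) = n1} = 1)
    (hunif : ∀ v w : Fin n → Bool, ones v = n1 → ones w = n1 →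
      P {ω | Z ω = v} = P {ω | Z ω = w})
    (hn : 2 ≤ n) (hn1 : 1 ≤ n1) (hn1n : n1 ≤ n)
    (a : Fin n → ℝ) {ε : ℝ} (hε : 0 < ε) :
    P {ω | ε ≤ |(n1:ℝ)⁻¹ * ∑ i ∈ Finset.univ.filter (fun i => Z ω i = true), a i
        - (n:ℝ)⁻¹ * ∑ i, a i|}
      ≤ ENNReal.ofReal ((∑ i, (a i)^2) / (n1 * n * ε^2)) := by
  have hnR : (0:ℝ) < n := by positivity
  have hn1R : (0:ℝ) < n1 := by exact_mod_cast hn1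
  set g : (Fin n → Bool) → ℝ := fun v =>
    (n1:ℝ)⁻¹ * ∑ i ∈ Finset.univ.filter (fun i => v i = true), a i - (n:ℝ)⁻¹ * ∑ i, a i
    with hg
  set W := Wset n n1 with hW
  set Wbad := W.filter (fun v => ε ≤ |g v|) with hWbad
  obtain ⟨v0, hv0⟩ := Wset_nonempty (n := n) hn1n
  have hNpos : 0 < W.card := Finset.card_pos.mpr ⟨v0, hv0⟩
  set N := W.card with hN
  -- measurability
  have hsing : ∀ v : Fin n → Bool, MeasurableSet {ω | Z ω = v} := by
    intro v
    exact hZ (MeasurableSet.singleton v)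
  have hEm : MeasurableSet {ω | ones (Z ω) = n1} := by
    have : MeasurableSet {v : Fin n → Bool | ones v = n1} :=
      Set.Finite.measurableSet (Set.toFinite _)
    exact hZ this
  -- P of each atom
  set c := P {ω | Z ω = v0} with hc
  have hcv : ∀ v ∈ W, P {ω | Z ω = v} = c := by
    intro v hv
    refine hunif v v0 ?_ ?_
    · simpa [hW, Wset] using hv
    · simpa [hW, Wset] using hv0
  have hdisj : (↑W : Set (Fin n → Bool)).PairwiseDisjoint (fun v => {ω | Z ω = v}) := by
    intro v _ w _ hvw
    rw [Function.onFun, Set.disjoint_left]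
    rintro ω h1 h2
    exact hvw (h1.symm.trans h2)
  have hWE : (⋃ v ∈ W, {ω | Z ω = v}) = {ω | ones (Z ω) = n1} := by
    ext ω
    simp only [Set.mem_iUnion, Set.mem_setOf_eq, hW, Wset, Finset.mem_filter,
      Finset.mem_univ, true_and]
    constructor
    · rintro ⟨v, hv, rfl⟩; exact hv
    · intro h; exact ⟨Z ω, h, rfl⟩
  have hsum1 : (N : ℝ≥0∞) * c = 1 := by
    have := measure_biUnion_finset (μ := P) hdisj (fun v _ => hsing v)
    rw [hWE, hE] at this
    rw [Finset.sum_congr rfl hcv, Finset.sum_const, nsmul_eq_mul] at this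
    exact this.symm
  have hNne : (N : ℝ≥0∞) ≠ 0 := by exact_mod_cast hNpos.ne'
  have hcval : c = (N : ℝ≥0∞)⁻¹ := by
    have := congrArg (fun x => (N : ℝ≥0∞)⁻¹ * x) hsum1
    simpa [← mul_assoc, ENNReal.inv_mul_cancel hNne (ENNReal.natCast_ne_top N)] using this
  -- step 1 : probability bound by counting
  have hstep1 : P {ω | ε ≤ |g (Z ω)|} ≤ (Wbad.card : ℝ≥0∞) * (N : ℝ≥0∞)⁻¹ := by
    have hsub : {ω | ε ≤ |g (Z ω)|} ⊆
        (⋃ v ∈ Wbad, {ω | Z ω = v}) ∪ {ω | ones (Z ω) = n1}ᶜ := by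
      intro ω hω
      by_cases hωE : ones (Z ω) = n1
      · left
        have hmem : Z ω ∈ Wbad := by
          simp only [hWbad, Finset.mem_filter, hW, Wset, Finset.mem_univ, true_and]
          exact ⟨hωE, hω⟩
        exact Set.mem_biUnion hmem rfl
      · right; exact hωE
    calc P {ω | ε ≤ |g (Z ω)|}
        ≤ P ((⋃ v ∈ Wbad, {ω | Z ω = v}) ∪ {ω | ones (Z ω) = n1}ᶜ) := measure_mono hsub
      _ ≤ P (⋃ v ∈ Wbad, {ω | Z ω = v}) + P ({ω | ones (Z ω) = n1}ᶜ) := measure_union_le _ _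
      _ = P (⋃ v ∈ Wbad, {ω | Z ω = v}) := by
          rw [(prob_compl_eq_zero_iff hEm).mpr hE, add_zero]
      _ ≤ ∑ v ∈ Wbad, P {ω | Z ω = v} := measure_biUnion_finset_le _ _
      _ = (Wbad.card : ℝ≥0∞) * c := by
          rw [Finset.sum_congr rfl (fun v hv => hcv v (Finset.mem_of_mem_filter v hv)),
            Finset.sum_const, nsmul_eq_mul]
      _ = (Wbad.card : ℝ≥0∞) * (N : ℝ≥0∞)⁻¹ := by rw [hcval]
  -- step 2 : counting bound (Chebyshev)
  set b : Fin n → ℝ := fun i => a i - (∑ j, a j) / n with hb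
  have hbsum : ∑ i, b i = 0 := by
    simp only [hb, Finset.sum_sub_distrib, Finset.sum_const, Finset.card_univ,
      Fintype.card_fin, nsmul_eq_mul]
    field_simp
    ring
  have hgW : ∀ v ∈ W, g v = (n1:ℝ)⁻¹ * ∑ i ∈ Finset.univ.filter (fun i => v i = true), b i := by
    intro v hv
    have hones : (Finset.univ.filter (fun i => v i = true)).card = n1 := by
      simp only [hW, Wset, Finset.mem_filter, Finset.mem_univ, true_and] at hv; exact hv
    simp only [hb, Finset.sum_sub_distrib, Finset.sum_const, nsmul_eq_mul, hones, hg]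
    field_simp
  have hbsq : ∑ i, (b i)^2 ≤ ∑ i, (a i)^2 := by
    set s := ∑ j, a j with hs
    have hcmul : (n:ℝ) * (s / n) = s := by field_simp
    have hexp : ∑ i, (b i)^2 = ∑ i, (a i)^2 - 2*(s/n)*s + n*(s/n)^2 := by
      have : ∀ i, (b i)^2 = (a i)^2 - 2*(s/n)*(a i) + (s/n)^2 := by
        intro i; simp only [hb]; ring
      rw [Finset.sum_congr rfl (fun i _ => this i)]
      simp [Finset.sum_add_distrib, Finset.sum_sub_distrib, ← Finset.mul_sum,
        Finset.sum_const, Finset.card_univ, Fintype.card_fin, ← hs]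
    have hexp2 : ∑ i, (b i)^2 = ∑ i, (a i)^2 - (n:ℝ) * (s/n)^2 := by
      rw [hexp]
      have hn0 : (n:ℝ) ≠ 0 := hnR.ne'
      field_simp
      ring
    have hnn : (0:ℝ) ≤ (n:ℝ) * (s/n)^2 := by positivity
    linarith
  have hcount : (Wbad.card : ℝ) * ε^2 ≤ (N:ℝ) * ((∑ i, (a i)^2) / (n1 * n)) := by
    have h1 : (Wbad.card : ℝ) * ε^2 ≤ ∑ v ∈ Wbad, (g v)^2 := by
      calc (Wbad.card : ℝ) * ε^2 = ∑ _v ∈ Wbad, ε^2 := by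
            rw [Finset.sum_const, nsmul_eq_mul]
        _ ≤ ∑ v ∈ Wbad, (g v)^2 := by
            refine Finset.sum_le_sum (fun v hv => ?_)
            have hv2 : ε ≤ |g v| := (Finset.mem_filter.mp hv).2
            calc ε^2 ≤ |g v|^2 := pow_le_pow_left₀ hε.le hv2 2
              _ = (g v)^2 := sq_abs _
    have h2 : ∑ v ∈ Wbad, (g v)^2 ≤ ∑ v ∈ W, (g v)^2 :=
      Finset.sum_le_sum_of_subset_of_nonneg (Finset.filter_subset _ _)
        (fun v _ _ => sq_nonneg _)
    have h3 : ∑ v ∈ W, (g v)^2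
        = ((n1:ℝ)⁻¹)^2 * ∑ v ∈ W, (∑ i ∈ Finset.univ.filter (fun i => v i = true), b i)^2 := by
      rw [Finset.mul_sum]
      refine Finset.sum_congr rfl (fun v hv => ?_)
      rw [hgW v hv, mul_pow]
    have h4 : ∑ v ∈ W, (∑ i ∈ Finset.univ.filter (fun i => v i = true), b i)^2
        ≤ ((N:ℝ) * n1 / n) * ∑ i, (a i)^2 := by
      refine le_trans (core_bound hn b hbsum) ?_
      have hco : (0:ℝ) ≤ (N:ℝ) * n1 / n := by positivity
      exact mul_le_mul_of_nonneg_left hbsq hco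
    have h5 : ((n1:ℝ)⁻¹)^2 * (((N:ℝ) * n1 / n) * ∑ i, (a i)^2)
        = (N:ℝ) * ((∑ i, (a i)^2) / (n1 * n)) := by
      field_simp
    calc (Wbad.card : ℝ) * ε^2 ≤ ∑ v ∈ Wbad, (g v)^2 := h1
      _ ≤ ∑ v ∈ W, (g v)^2 := h2
      _ = ((n1:ℝ)⁻¹)^2 * ∑ v ∈ W, (∑ i ∈ Finset.univ.filter (fun i => v i = true), b i)^2 := h3
      _ ≤ ((n1:ℝ)⁻¹)^2 * (((N:ℝ) * n1 / n) * ∑ i, (a i)^2) := by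
          refine mul_le_mul_of_nonneg_left h4 (by positivity)
      _ = (N:ℝ) * ((∑ i, (a i)^2) / (n1 * n)) := h5
  have hreal : (Wbad.card : ℝ) / (N:ℝ) ≤ (∑ i, (a i)^2) / (n1 * n * ε^2) := by
    have hNR : (0:ℝ) < N := by exact_mod_cast hNpos
    have hpos : (0:ℝ) < (n1:ℝ) * n := mul_pos hn1R hnR
    rw [← mul_div_assoc] at hcount
    have h6 : (Wbad.card : ℝ) * ε^2 * ((n1:ℝ)*n) ≤ (N:ℝ) * ∑ i, (a i)^2 :=
      (le_div_iff₀ hpos).mp hcount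
    rw [div_le_div_iff₀ hNR (by positivity)]
    nlinarith [h6]
  calc P {ω | ε ≤ |(n1:ℝ)⁻¹ * ∑ i ∈ Finset.univ.filter (fun i => Z ω i = true), a i
        - (n:ℝ)⁻¹ * ∑ i, a i|}
      = P {ω | ε ≤ |g (Z ω)|} := rfl
    _ ≤ (Wbad.card : ℝ≥0∞) * (N : ℝ≥0∞)⁻¹ := hstep1
    _ = ENNReal.ofReal ((Wbad.card : ℝ) / (N : ℝ)) := by
        rw [ENNReal.ofReal_div_of_pos (by exact_mod_cast hNpos), ENNReal.ofReal_natCast,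
          ENNReal.ofReal_natCast, div_eq_mul_inv]
    _ ≤ ENNReal.ofReal ((∑ i, (a i)^2) / (n1 * n * ε^2)) := ENNReal.ofReal_le_ofReal hreal

/-- **Lemma (Randomization law of large numbers).**
If `(1/n)∑ aᵢₙ² = o(n)`, then the treated-arm average of the `aᵢₙ` converges in probability
to the population average `āₙ`. -/
theorem randomization_law_of_large_numbers
    {Ω : Type} [MeasurableSpace Ω] (P : Measure Ω) [IsProbabilityMeasure P]
    (Z : (n : ℕ) → Ω → Fin n → Bool) (n1 : ℕ → ℕ)
    (pmin pmax : ℝ) (hpmin : 0 < pmin) (hpmax : pmax < 1)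
    (hp : ∀ n : ℕ, 0 < n → pmin ≤ (n1 n : ℝ) / n ∧ (n1 n : ℝ) / n ≤ pmax)
    (hCRD : IsCRD P Z n1)
    (a : (n : ℕ) → Fin n → ℝ)
    (ha : Tendsto (fun n : ℕ => ((n : ℝ)⁻¹ * ∑ i, (a n i) ^ 2) / n) atTop (nhds 0)) :
    TendstoInProb P (fun n ω =>
      (n1 n : ℝ)⁻¹ * ∑ i ∈ Finset.univ.filter (fun i => Z n ω i = true), a n i
        - (n : ℝ)⁻¹ * ∑ i, a n i) := by
  intro ε hε
  have hb0 : Tendsto (fun n : ℕ =>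
      ENNReal.ofReal ((1/(pmin*ε^2)) * (((n:ℝ)⁻¹ * ∑ i, (a n i)^2)/n))) atTop (nhds 0) := by
    have h1 := ha.const_mul (1/(pmin*ε^2))
    rw [mul_zero] at h1
    have h2 := ENNReal.tendsto_ofReal h1
    simpa using h2
  refine tendsto_of_tendsto_of_tendsto_of_le_of_le' tendsto_const_nhds hb0
    (Eventually.of_forall fun n => by simp) ?_
  filter_upwards [eventually_ge_atTop (max 2 ⌈pmin⁻¹⌉₊)] with n hn
  have hn2 : 2 ≤ n := le_trans (le_max_left _ _) hn
  have hnpos : 0 < n := by omega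
  obtain ⟨hp1, hp2⟩ := hp n hnpos
  have hnR : (0:ℝ) < n := by positivity
  have hn1le : n1 n ≤ n := by
    have h3 : (n1 n : ℝ) < n := by
      have h4 := lt_of_le_of_lt hp2 hpmax
      calc (n1 n : ℝ) = ((n1 n : ℝ)/n) * n := by field_simp
        _ < 1 * n := mul_lt_mul_of_pos_right h4 hnR
        _ = n := one_mul _
    exact_mod_cast h3.le
  have hpminn : pmin * n ≤ (n1 n : ℝ) := by
    calc pmin * n ≤ ((n1 n:ℝ)/n) * n := mul_le_mul_of_nonneg_right hp1 hnR.le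
      _ = (n1 n : ℝ) := by field_simp
  have hceil : (pmin⁻¹ : ℝ) ≤ n := by
    refine le_trans (Nat.le_ceil _) ?_
    exact_mod_cast le_trans (le_max_right _ _) hn
  have h1n : (1:ℝ) ≤ pmin * n := by
    calc (1:ℝ) = pmin * pmin⁻¹ := (mul_inv_cancel₀ hpmin.ne').symm
      _ ≤ pmin * n := mul_le_mul_of_nonneg_left hceil hpmin.le
  have hn11 : 1 ≤ n1 n := by
    have : (1:ℝ) ≤ (n1 n : ℝ) := le_trans h1n hpminn
    exact_mod_cast this
  obtain ⟨hZm, hE, hunif⟩ := hCRD n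
  refine le_trans (per_n_bound P (Z n) hZm hE hunif hn2 hn11 hn1le (a n) hε) ?_
  apply ENNReal.ofReal_le_ofReal
  have hn1R : (0:ℝ) < n1 n := lt_of_lt_of_le (by positivity) hpminn
  have hS : (0:ℝ) ≤ ∑ i, (a n i)^2 := Finset.sum_nonneg (fun i _ => sq_nonneg _)
  have key : pmin * (n:ℝ)^2 * ε^2 ≤ (n1 n : ℝ) * n * ε^2 := by
    have h7 := mul_le_mul_of_nonneg_right hpminn (mul_nonneg hnR.le (sq_nonneg ε))
    nlinarith [h7]
  calc (∑ i, (a n i)^2) / ((n1 n:ℝ) * n * ε^2)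
      ≤ (∑ i, (a n i)^2) / (pmin * (n:ℝ)^2 * ε^2) := by
        apply div_le_div_of_nonneg_left hS (by positivity) key
    _ = (1/(pmin*ε^2)) * (((n:ℝ)⁻¹ * ∑ i, (a n i)^2)/n) := by
        field_simp
        try ring
        try tauto
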